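/- Let n ≥ 1. The one-relator presented group ⟨x, t | ρ_n(x,t)⟩ is torsion-free: its only element of finite order is the identity. -/

import Mathlib

/-- The word `ρ_k(x,t) = (t x t⁻¹) x (t x t⁻¹)⁻¹ x^{-(k+1)}`, evaluated at elements
`x`, `t` of a group. -/
def rhoWord {G : Type*} [Group G] (k : ℕ) (x t : G) : G :=
  (t * x * t⁻¹) * x * (t * x * t⁻¹)⁻¹ * x ^ (-(k + 1 : ℤ))

open HNNExtension HNNExtension.NormalWord Subgroup

namespace HNNTF

section HNN


variable {G : Type*} [Group G] {A B : Subgroup G} (φ : A ≃* B)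

/-- the elementary factor `t^u * g` -/
def fac (p : ℤˣ × G) : HNNExtension G A B φ := t ^ (p.1 : ℤ) * of p.2

/-- the product of a list of factors -/
def lp (L : List (ℤˣ × G)) : HNNExtension G A B φ := (L.map (fac φ)).prod

@[simp] lemma lp_nil : lp φ ([] : List (ℤˣ × G)) = 1 := rfl

@[simp] lemma lp_cons (p : ℤˣ × G) (L : List (ℤˣ × G)) :
    lp φ (p :: L) = fac φ p * lp φ L := by simp [lp]

@[simp] lemma lp_append (L M : List (ℤˣ × G)) :
    lp φ (L ++ M) = lp φ L * lp φ M := by simp [lp]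

@[simp] lemma lp_singleton (p : ℤˣ × G) : lp φ [p] = fac φ p := by simp [lp]

lemma reducedWord_prod (w : ReducedWord G A B) :
    w.prod φ = of w.head * lp φ w.toList := rfl

lemma conj_fac {u : ℤˣ} {g : G} (hg : g ∈ toSubgroup A B u) :
    (t ^ (u : ℤ) * of g * (t ^ (u : ℤ))⁻¹ : HNNExtension G A B φ)
      = of (toSubgroupEquiv φ u ⟨g, hg⟩ : G) := by
  rcases Int.units_eq_one_or u with rfl | rfl
  · simp; exact (equiv_eq_conj (φ := φ) ⟨g, hg⟩).symm
  · simp; exact (equiv_symm_eq_conj (φ := φ) ⟨g, hg⟩).symm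

/-- The chain relation used for reduced words. -/
abbrev R : (ℤˣ × G) → (ℤˣ × G) → Prop :=
  fun a b => a.2 ∈ toSubgroup A B a.1 → a.1 = b.1

/-- Every element is the product of a reduced word -/
lemma exists_reducedWord (x : HNNExtension G A B φ) :
    ∃ w : ReducedWord G A B, w.prod φ = x := by
  rcases TransversalPair.nonempty G A B with ⟨d⟩
  exact ⟨(equiv φ d x).toReducedWord, (equiv φ d).symm_apply_apply x⟩

/-- absorbing a base element on the right of a reduced list -/
lemma absorb (h : G) {L : List (ℤˣ × G)} (hL : L ≠ [])
    (hchain : L.Chain' (R (A := A) (B := B))) :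
    ∃ L' : List (ℤˣ × G), L'.Chain' (R (A := A) (B := B)) ∧
      L'.length = L.length ∧ lp φ L' = lp φ L * of h := by
  refine ⟨L.dropLast ++ [((L.getLast hL).1, (L.getLast hL).2 * h)], ?_, ?_, ?_⟩
  · have hchain' := hchain
    conv at hchain' => rw [← List.dropLast_append_getLast hL]
    rw [List.Chain', List.isChain_append] at hchain' ⊢
    refine ⟨hchain'.1, List.isChain_singleton _, ?_⟩
    intro a ha b hb
    simp only [List.head?_cons, Option.mem_def, Option.some.injEq] at hb
    subst hb
    have := hchain'.2.2 a ha (L.getLast hL) (by simp)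
    simpa using this
  · have := List.length_pos_iff.2 hL
    simp only [List.length_append, List.length_dropLast, List.length_singleton]
    omega
  · conv_rhs => rw [← List.dropLast_append_getLast hL]
    simp [fac, mul_assoc]

theorem exists_conj_of_isOfFinOrder {x : HNNExtension G A B φ}
    (hx : IsOfFinOrder x) :
    ∃ (c : HNNExtension G A B φ) (g : G), x = c * of g * c⁻¹ := by
  classical
  by_cases hbase : ∃ (c : HNNExtension G A B φ) (g : G), x = c * of g * c⁻¹
  · exact hbase
  exfalso
  obtain ⟨w, hw⟩ := exists_reducedWord φ x
  have hLw : w.toList ≠ [] := by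
    intro h
    exact hbase ⟨1, w.head, by simp [← hw, reducedWord_prod, h]⟩
  set S : ℕ → Prop := fun m => ∃ (c : HNNExtension G A B φ) (L : List (ℤˣ × G)),
    L.Chain' (R (A := A) (B := B)) ∧ lp φ L = c * x * c⁻¹ ∧ L.length = m with hSdef
  have hS0 : ∃ m, S m := by
    obtain ⟨L', hc', hlen', hprod'⟩ := absorb φ w.head hLw w.chain
    refine ⟨L'.length, (of w.head)⁻¹, L', hc', ?_, rfl⟩
    rw [hprod', ← hw, reducedWord_prod]
    group
  set m := Nat.find hS0 with hm
  obtain ⟨c, L, hchain, hprod, hlen⟩ : S m := Nat.find_spec hS0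
  rcases hL : L with _ | ⟨⟨u₁, g₁⟩, T⟩
  · -- empty word: x is in the base up to conjugacy: contradiction
    subst hL
    refine hbase ⟨c⁻¹, 1, ?_⟩
    have h : c * x * c⁻¹ = 1 := by simpa using hprod.symm
    calc x = c⁻¹ * (c * x * c⁻¹) * (c⁻¹)⁻¹ := by group
    _ = c⁻¹ * of 1 * (c⁻¹)⁻¹ := by rw [h]; simp
  · subst hL
    have hLne : ((u₁, g₁) :: T : List (ℤˣ × G)) ≠ [] := by simp
    set L : List (ℤˣ × G) := (u₁, g₁) :: T with hLdef
    -- Junction property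
    have hJ : (L.getLast hLne).2 ∈ toSubgroup A B (L.getLast hLne).1 →
        (L.getLast hLne).1 = u₁ := by
      intro hmem
      by_contra hne
      have hneg : ((L.getLast hLne).1 : ℤˣ) = -u₁ := by
        rcases Int.units_eq_one_or (L.getLast hLne).1 with h1 | h1 <;>
          rcases Int.units_eq_one_or u₁ with h2 | h2 <;>
          rw [h1, h2] at hne ⊢ <;>
          first
            | rfl
            | exact absurd rfl hne
            | norm_num
      rcases hT : T with _ | ⟨q, T'⟩
      · subst hT
        exact hne rfl
      · subst hT
        have hTne : (q :: T' : List (ℤˣ × G)) ≠ [] := by simp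
        have hlast : L.getLast hLne = (q :: T').getLast hTne :=
          List.getLast_cons hTne
        set pm : ℤˣ × G := L.getLast hLne with hpm
        have hTdec : (q :: T' : List (ℤˣ × G)) =
            (q :: T').dropLast ++ [pm] := by
          rw [hlast]; exact (List.dropLast_append_getLast hTne).symm
        set b' : G := (toSubgroupEquiv φ pm.1 ⟨pm.2, hmem⟩ : G) * g₁ with hb'
        have hcollapse : fac φ pm * fac (A := A) (B := B) φ (u₁, g₁) = of b' := by
          have hu : ((u₁ : ℤ)) = -((pm.1 : ℤ)) := by
            rw [hpm] at hneg ⊢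
            rw [hneg]; simp
          calc fac φ pm * fac (A := A) (B := B) φ (u₁, g₁)
              = (t ^ (pm.1 : ℤ) * of pm.2 * (t ^ (pm.1 : ℤ))⁻¹) * of g₁ := by
                simp only [fac, hu, zpow_neg]; group
            _ = of (toSubgroupEquiv φ pm.1 ⟨pm.2, hmem⟩ : G) * of g₁ := by
                rw [conj_fac]
            _ = of b' := by rw [← map_mul]
        set D : List (ℤˣ × G) := (q :: T').dropLast with hD
        have hnew : of b' * lp φ D =
            fac φ pm * (c * x * c⁻¹) * (fac φ pm)⁻¹ := by
          rw [← hprod]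
          conv_rhs => rw [hLdef, lp_cons]
          conv_rhs => rw [hTdec]
          rw [lp_append, lp_singleton, ← mul_assoc, hcollapse]
          group
        have hDchain : D.Chain' (R (A := A) (B := B)) := by
          refine hchain.tail.prefix ?_
          exact ⟨[pm], hTdec.symm⟩
        by_cases hDnil : D = []
        · -- collapsed to a base element: contradiction with hbase
          refine hbase ⟨(fac φ pm * c)⁻¹, b', ?_⟩
          rw [hDnil, lp_nil, mul_one] at hnew
          rw [hnew]
          group
        · -- strictly shorter conjugate: contradiction with minimality
          have hDne : D ≠ [] := hDnil
          obtain ⟨D', hD'c, hD'len, hD'prod⟩ := absorb φ b' hDne hDchain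
          have hSshort : S D.length := by
            refine ⟨(of b')⁻¹ * (fac φ pm * c), D', hD'c, ?_, hD'len⟩
            rw [hD'prod]
            have : lp φ D = (of b')⁻¹ * (fac φ pm * (c * x * c⁻¹) * (fac φ pm)⁻¹) := by
              rw [← hnew]; group
            rw [this]; group
          have hlt : D.length < m := by
            rw [← hlen, hLdef, hD]
            simp only [List.length_cons, List.length_dropLast]
            omega
          exact Nat.find_min hS0 hlt hSshort
    -- powers of L are reduced
    have hhead : ∀ k : ℕ, 0 < k →
        ((List.replicate k L).flatten).head? = some (u₁, g₁) := by
      intro k hk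
      rcases k with _ | k
      · omega
      · simp [List.replicate_succ, hLdef]
    have hLpow : ∀ k : ℕ, (List.replicate k L).flatten.Chain' (R (A := A) (B := B)) ∧
        lp φ (List.replicate k L).flatten = (lp φ L) ^ k := by
      intro k
      induction k with
      | zero => simp [List.Chain']
      | succ k ih =>
        rw [List.replicate_succ, List.flatten_cons]
        constructor
        · rw [List.Chain', List.isChain_append]
          refine ⟨hchain, ih.1, ?_⟩
          intro a ha b hb
          rcases Nat.eq_zero_or_pos k with rfl | hk
          · simp at hb
          · rw [hhead k hk] at hb
            simp only [Option.mem_def, Option.some.injEq] at hb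
            subst hb
            have ha' : a = L.getLast hLne := by
              rwa [List.getLast?_eq_getLast hLne, Option.mem_def,
                Option.some.injEq, eq_comm] at ha
            subst ha'
            exact hJ
        · rw [lp_append, ih.2, pow_succ']
    obtain ⟨k, hk0, hxk⟩ := isOfFinOrder_iff_pow_eq_one.1 hx
    have hck : (c * x * c⁻¹) ^ k = 1 := by
      rw [conj_pow, hxk]; group
    have hwk : (⟨1, (List.replicate k L).flatten, (hLpow k).1⟩ :
        ReducedWord G A B).prod φ = 1 := by
      rw [reducedWord_prod]
      simp only [map_one, one_mul]
      rw [(hLpow k).2, hprod, hck]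
    have hnil := ReducedWord.toList_eq_nil_of_mem_of_range φ _ (hwk ▸ one_mem _)
    simp only at hnil
    have hlenk : ((List.replicate k L).flatten).length = k * L.length := by
      simp [List.length_flatten, hLdef]
    rw [hnil] at hlenk
    simp [hLdef] at hlenk
    omega

theorem isTorsionFree (hG : ∀ g : G, g ≠ 1 → ¬IsOfFinOrder g) :
    ∀ g : HNNExtension G A B φ, g ≠ 1 → ¬IsOfFinOrder g := by
  intro x hx hfin
  obtain ⟨c, g, rfl⟩ := exists_conj_of_isOfFinOrder φ hfin
  apply hx
  obtain ⟨k, hk, hk1⟩ := isOfFinOrder_iff_pow_eq_one.1 hfin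
  have h1 : of (g ^ k) = (1 : HNNExtension G A B φ) := by
    have := hk1
    rw [conj_pow] at this
    have h2 : of g ^ k = (1 : HNNExtension G A B φ) := by
      calc of g ^ k = c⁻¹ * (c * of g ^ k * c⁻¹) * c := by group
      _ = 1 := by rw [this]; group
    rw [map_pow, h2]
  have hg : g ^ k = 1 := of_injective (φ := φ) (by simpa using h1)
  have hg1 : g = 1 := by
    by_contra h
    exact hG g h (isOfFinOrder_iff_pow_eq_one.2 ⟨k, hk, hg⟩)
  simp [hg1]


end HNN

section Cyc


variable {G H : Type*} [Group G] [Group H]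

lemma zpowersHom_injective {x : G} (hx : ¬ IsOfFinOrder x) :
    Function.Injective (zpowersHom G x) := by
  have h := injective_zpow_iff_not_isOfFinOrder.2 hx
  intro a b hab
  have h2 : x ^ a.toAdd = x ^ b.toAdd := hab
  exact Multiplicative.toAdd.injective (h h2)

lemma range_zpowersHom (x : G) :
    (zpowersHom G x).range = Subgroup.zpowers x := by
  ext g
  simp only [MonoidHom.mem_range, zpowersHom_apply, Subgroup.mem_zpowers_iff]
  exact ⟨fun ⟨a, ha⟩ => ⟨a.toAdd, ha⟩, fun ⟨k, hk⟩ => ⟨Multiplicative.ofAdd k, hk⟩⟩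

/-- The isomorphism `Multiplicative ℤ ≃* zpowers x` for `x` of infinite order. -/
noncomputable def zEquivZPowers {x : G} (hx : ¬ IsOfFinOrder x) :
    Multiplicative ℤ ≃* Subgroup.zpowers x :=
  (MonoidHom.ofInjective (zpowersHom_injective hx)).trans
    (MulEquiv.subgroupCongr (range_zpowersHom x))

@[simp] lemma zEquivZPowers_apply {x : G} (hx : ¬ IsOfFinOrder x) (k : ℤ) :
    (zEquivZPowers hx (Multiplicative.ofAdd k) : G) = x ^ k := by
  simp only [zEquivZPowers, MulEquiv.trans_apply, MulEquiv.subgroupCongr_apply]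
  rw [MonoidHom.ofInjective_apply]
  rfl

/-- The isomorphism between two infinite cyclic subgroups sending `x ^ k` to `y ^ k`. -/
noncomputable def zpowersMulEquiv {x : G} {y : H} (hx : ¬ IsOfFinOrder x)
    (hy : ¬ IsOfFinOrder y) : Subgroup.zpowers x ≃* Subgroup.zpowers y :=
  (zEquivZPowers hx).symm.trans (zEquivZPowers hy)

lemma zpowersMulEquiv_apply {x : G} {y : H} (hx : ¬ IsOfFinOrder x)
    (hy : ¬ IsOfFinOrder y) (k : ℤ) (hmem : x ^ k ∈ Subgroup.zpowers x) :
    (zpowersMulEquiv hx hy ⟨x ^ k, hmem⟩ : H) = y ^ k := by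
  have h1 : (⟨x ^ k, hmem⟩ : Subgroup.zpowers x)
      = zEquivZPowers hx (Multiplicative.ofAdd k) := by
    ext
    simp [zEquivZPowers_apply hx k]
  rw [zpowersMulEquiv, MulEquiv.trans_apply, h1, MulEquiv.symm_apply_apply]
  exact zEquivZPowers_apply hy k

lemma intTorsionFree : ∀ g : Multiplicative ℤ, g ≠ 1 → ¬IsOfFinOrder g := by
  intro g hg hfin
  obtain ⟨k, hk, hk1⟩ := isOfFinOrder_iff_pow_eq_one.1 hfin
  apply hg
  have : (k : ℤ) • g.toAdd = 0 := by
    have := congrArg Multiplicative.toAdd hk1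
    simpa [toAdd_pow] using this
  rcases smul_eq_zero.1 this with h | h
  · exact absurd (by exact_mod_cast h) (by omega)
  · simpa using congrArg Multiplicative.ofAdd h

lemma ofAdd_not_isOfFinOrder {a : ℤ} (ha : a ≠ 0) :
    ¬ IsOfFinOrder (Multiplicative.ofAdd a) := by
  intro hfin
  exact intTorsionFree _ (by simpa using ha) hfin


end Cyc

section Asm
variable {G H : Type*} [Group G] [Group H]

lemma map_rhoWord (f : G →* H) (k : ℕ) (x t : G) :
    f (rhoWord k x t) = rhoWord k (f x) (f t) := by
  simp [rhoWord, map_mul, map_inv, map_zpow]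

/-! ### the group `K = BS(1, n+1)` -/

def x0 : Multiplicative ℤ := Multiplicative.ofAdd 1

lemma x0_zpow (k : ℤ) : x0 ^ k = Multiplicative.ofAdd k := by
  simp [x0, ← ofAdd_zsmul]

lemma x0_inf : ¬ IsOfFinOrder x0 := ofAdd_not_isOfFinOrder one_ne_zero

variable (n : ℕ)

lemma x0N_inf : ¬ IsOfFinOrder (x0 ^ ((n : ℤ) + 1)) := by
  rw [x0_zpow]
  exact ofAdd_not_isOfFinOrder (by omega)

noncomputable def φ0 : (zpowers x0) ≃* (zpowers (x0 ^ ((n : ℤ) + 1))) :=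
  zpowersMulEquiv x0_inf (x0N_inf n)

/-- The Baumslag–Solitar group `BS(1, n+1)` as an HNN extension of `ℤ`. -/
noncomputable abbrev K :=
  HNNExtension (Multiplicative ℤ) (zpowers x0) (zpowers (x0 ^ ((n : ℤ) + 1))) (φ0 n)

noncomputable def xK : K n := of x0
noncomputable def tK : K n := t

lemma K_tf : ∀ g : K n, g ≠ 1 → ¬IsOfFinOrder g := isTorsionFree _ intTorsionFree

lemma tK_conj : tK n * xK n * (tK n)⁻¹ = (xK n) ^ ((n : ℤ) + 1) := by
  have hmem : x0 ∈ zpowers x0 := mem_zpowers x0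
  have h := t_mul_of (φ := φ0 n) ⟨x0, hmem⟩
  have happ : ((φ0 n ⟨x0, hmem⟩ : zpowers (x0 ^ ((n : ℤ) + 1))) : Multiplicative ℤ)
      = (x0 ^ ((n : ℤ) + 1)) ^ (1 : ℤ) := by
    have h1 : (⟨x0, hmem⟩ : zpowers x0) = ⟨x0 ^ (1 : ℤ), by simp⟩ := by simp
    rw [φ0, h1, zpowersMulEquiv_apply]
  rw [zpow_one] at happ
  rw [tK, xK, mul_inv_eq_iff_eq_mul]
  calc (t : K n) * of x0 = of (φ0 n ⟨x0, hmem⟩ : Multiplicative ℤ) * t := h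
  _ = of x0 ^ ((n : ℤ) + 1) * t := by rw [happ, map_zpow]

lemma xK_ne_one : xK n ≠ 1 := by
  intro h
  have : x0 = 1 := of_injective (φ := φ0 n) (by simpa [xK] using h)
  simp [x0] at this

lemma xK_inf : ¬ IsOfFinOrder (xK n) := K_tf n _ (xK_ne_one n)

lemma tK_ne_one : tK n ≠ 1 := by
  intro h
  have hw : (⟨1, [(1, 1)], List.isChain_singleton _⟩ :
      ReducedWord (Multiplicative ℤ) (zpowers x0) (zpowers (x0 ^ ((n : ℤ) + 1)))).prod (φ0 n)
      = (t : K n) := by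
    simp [ReducedWord.prod]
  have := ReducedWord.toList_eq_nil_of_mem_of_range (φ0 n) _
    (by rw [hw]; rw [tK] at h; rw [h]; exact one_mem _)
  simp at this

lemma tK_inf : ¬ IsOfFinOrder (tK n) := K_tf n _ (tK_ne_one n)

/-! ### the group `G n` -/

noncomputable def φ1 : (zpowers (xK n)) ≃* (zpowers (tK n)) :=
  zpowersMulEquiv (xK_inf n) (tK_inf n)

noncomputable abbrev Gr :=
  HNNExtension (K n) (zpowers (xK n)) (zpowers (tK n)) (φ1 n)

noncomputable def xG : Gr n := of (xK n)
noncomputable def tG : Gr n := t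

lemma Gr_tf : ∀ g : Gr n, g ≠ 1 → ¬IsOfFinOrder g := isTorsionFree _ (K_tf n)

lemma tG_conj : tG n * xG n * (tG n)⁻¹ = of (tK n) := by
  have hmem : xK n ∈ zpowers (xK n) := mem_zpowers _
  have h := t_mul_of (φ := φ1 n) ⟨xK n, hmem⟩
  have happ : ((φ1 n ⟨xK n, hmem⟩ : zpowers (tK n)) : K n) = tK n ^ (1 : ℤ) := by
    have h1 : (⟨xK n, hmem⟩ : zpowers (xK n)) = ⟨xK n ^ (1 : ℤ), by simp⟩ := by simp
    rw [φ1, h1, zpowersMulEquiv_apply]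
  rw [zpow_one] at happ
  rw [tG, xG, mul_inv_eq_iff_eq_mul]
  calc (t : Gr n) * of (xK n) = of (φ1 n ⟨xK n, hmem⟩ : K n) * t := h
  _ = of (tK n) * t := by rw [happ]

lemma rho_eq_one : rhoWord n (xG n) (tG n) = 1 := by
  rw [rhoWord]
  have h1 : tG n * xG n * (tG n)⁻¹ = of (tK n) := tG_conj n
  rw [h1, xG, ← map_inv, ← map_zpow, ← map_mul, ← map_mul, ← map_mul]
  have h2 : tK n * xK n * (tK n)⁻¹ * xK n ^ (-((n : ℤ) + 1)) = 1 := by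
    rw [tK_conj n, ← zpow_add]
    have e : ((n : ℤ) + 1) + (-((n : ℤ) + 1)) = 0 := by ring
    rw [e, zpow_zero]
  rw [h2, map_one]


end Asm

end HNNTF


namespace Final

open HNNTF

variable (n : ℕ)

/-- the relator set -/
def rels : Set (FreeGroup (Fin 2)) := {rhoWord n (FreeGroup.of 0) (FreeGroup.of 1)}

noncomputable def gens : Fin 2 → Gr n := ![xG n, tG n]

lemma hrel : ∀ r ∈ rels n, FreeGroup.lift (gens n) r = 1 := by
  intro r hr
  rw [rels, Set.mem_singleton_iff] at hr
  subst hr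
  rw [map_rhoWord]
  simp only [FreeGroup.lift_apply_of, gens, Matrix.cons_val_zero, Matrix.cons_val_one, Matrix.head_cons, Matrix.cons_val_fin_one]
  exact rho_eq_one n

noncomputable def f : PresentedGroup (rels n) →* Gr n := PresentedGroup.toGroup (hrel n)

def X : PresentedGroup (rels n) := PresentedGroup.of 0
def T : PresentedGroup (rels n) := PresentedGroup.of 1

lemma hPrel : rhoWord n (X n) (T n) = 1 := by
  have h1 : PresentedGroup.mk (rels n) (rhoWord n (FreeGroup.of 0) (FreeGroup.of 1)) = 1 :=
    (QuotientGroup.eq_one_iff _).2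
      (Subgroup.subset_normalClosure (by rw [rels]; exact Set.mem_singleton _))
  rw [map_rhoWord] at h1
  exact h1

noncomputable def W : PresentedGroup (rels n) := T n * X n * (T n)⁻¹

lemma hconj : W n * X n * (W n)⁻¹ = X n ^ ((n : ℤ) + 1) := by
  have h := hPrel n
  rw [rhoWord, zpow_neg] at h
  exact mul_inv_eq_one.1 h

noncomputable def hZ : Multiplicative ℤ →* PresentedGroup (rels n) := zpowersHom _ (X n)

lemma hZ_x0 : hZ n x0 = X n := by
  simp [hZ, x0, zpowersHom_apply]

lemma cond1 : ∀ a : zpowers x0,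
    W n * hZ n (a : Multiplicative ℤ) = hZ n ((φ0 n a : zpowers (x0 ^ ((n : ℤ) + 1))) :
      Multiplicative ℤ) * W n := by
  rintro ⟨a, ha⟩
  obtain ⟨k, hk⟩ := Subgroup.mem_zpowers_iff.1 ha
  subst hk
  have h1 : hZ n (x0 ^ k) = X n ^ k := by rw [map_zpow, hZ_x0]
  have h2 : ((φ0 n ⟨x0 ^ k, ha⟩ : zpowers (x0 ^ ((n : ℤ) + 1))) : Multiplicative ℤ)
      = (x0 ^ ((n : ℤ) + 1)) ^ k := by
    rw [φ0, zpowersMulEquiv_apply]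
  simp only [h1, h2]
  rw [map_zpow, map_zpow, hZ_x0]
  have h3 : (X n ^ ((n : ℤ) + 1)) ^ k = W n * X n ^ k * (W n)⁻¹ := by
    rw [← hconj n, conj_zpow]
  rw [h3]
  group

noncomputable def hK : K n →* PresentedGroup (rels n) :=
  HNNExtension.lift (hZ n) (W n) (cond1 n)

lemma hK_xK : hK n (xK n) = X n := by rw [hK, xK, lift_of, hZ_x0]
lemma hK_tK : hK n (tK n) = W n := by rw [hK, tK, lift_t]

lemma cond2 : ∀ a : zpowers (xK n),
    T n * hK n (a : K n) = hK n ((φ1 n a : zpowers (tK n)) : K n) * T n := by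
  rintro ⟨a, ha⟩
  obtain ⟨k, hk⟩ := Subgroup.mem_zpowers_iff.1 ha
  subst hk
  have h1 : hK n (xK n ^ k) = X n ^ k := by rw [map_zpow, hK_xK]
  have h2 : ((φ1 n ⟨xK n ^ k, ha⟩ : zpowers (tK n)) : K n) = tK n ^ k := by
    rw [φ1, zpowersMulEquiv_apply]
  simp only [h1, h2]
  rw [map_zpow, hK_tK]
  have h3 : W n ^ k = T n * X n ^ k * (T n)⁻¹ := by
    rw [W, conj_zpow]
  rw [h3]
  group

noncomputable def hG : Gr n →* PresentedGroup (rels n) :=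
  HNNExtension.lift (hK n) (T n) (cond2 n)

lemma hG_f : ∀ p : PresentedGroup (rels n), hG n (f n p) = p := by
  have h : (hG n).comp (f n) = MonoidHom.id _ := by
    apply PresentedGroup.ext
    intro i
    fin_cases i
    · show hG n (f n (PresentedGroup.of 0)) = PresentedGroup.of 0
      rw [f, PresentedGroup.toGroup.of]
      show hG n (gens n 0) = X n
      simp only [gens, Matrix.cons_val_zero]
      rw [xG, hG, lift_of, hK_xK]
    · show hG n (f n (PresentedGroup.of 1)) = PresentedGroup.of 1
      rw [f, PresentedGroup.toGroup.of]
      show hG n (gens n 1) = T n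
      simp only [gens, Matrix.cons_val_one, Matrix.head_cons, Matrix.cons_val_fin_one]
      rw [tG, hG, lift_t]
  intro p
  exact DFunLike.congr_fun h p

theorem main : ∀ g : PresentedGroup (rels n), g ≠ 1 → ¬IsOfFinOrder g := by
  intro p hp hfin
  refine Gr_tf n (f n p) ?_ ((f n).isOfFinOrder hfin)
  intro h1
  apply hp
  rw [← hG_f n p, h1, map_one]

end Final


/-- For `n ≥ 1`, the one-relator presented group `⟨x, t | ρ_n(x,t)⟩` is
torsion-free: its only element of finite order is the identity. -/
theorem oneRelator_torsionFree (n : ℕ) (hn : 1 ≤ n) :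
    ∀ g : PresentedGroup ({rhoWord n (FreeGroup.of 0) (FreeGroup.of 1)} :
        Set (FreeGroup (Fin 2))), g ≠ 1 → ¬IsOfFinOrder g :=
  Final.main n
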